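/- Let p be a prime, D ⊆ ℤ/pℤ a nonempty subset of cardinality n, b ∈ ℤ/pℤ, and k a positive integer with k ≤ p − 1. Let N be the number of k-tuples (x_1,…,x_k) ∈ D^k with pairwise distinct coordinates such that x_1 + x_2 + ⋯ + x_k = b. Let Φ(D) = max over nontrivial additive characters χ of ℤ/pℤ of |Σ_{a ∈ D} χ(a)|. Then N/k! ≥ (1/p)·C(n,k) − C(Φ(D)+k−1, k); equivalently, N ≥ n(n−1)⋯(n−k+1)/p − ∏_{j=0}^{k−1}(Φ(D)+j). -/

import Mathlib

open Finset

/-- The Fourier bias of a subset `D ⊆ ℤ/pℤ`: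
`Φ(D) = max_{χ ≠ 1} |Σ_{a ∈ D} χ(a)|`, the maximum over nontrivial additive
characters of the absolute value of the character sum over `D`. -/
noncomputable def fourierBias {p : ℕ} (D : Finset (ZMod p)) : ℝ :=
  sSup {r : ℝ | ∃ χ : AddChar (ZMod p) ℂ, χ ≠ 1 ∧ r = ‖∑ a ∈ D, χ a‖}

section Helpers
variable {α : Type*} [Fintype α] [DecidableEq α]

lemma card_injTuples (S : Finset α) (k : ℕ) :
    (univ.filter (fun x : Fin k → α => (∀ i, x i ∈ S) ∧ Function.Injective x)).card
      = S.card.descFactorial k := by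
  rw [← Fintype.card_coe (univ.filter _)]
  have e : {x : Fin k → α // x ∈ univ.filter
      (fun x : Fin k → α => (∀ i, x i ∈ S) ∧ Function.Injective x)} ≃ (Fin k ↪ ↥S) :=
    { toFun := fun x => ⟨fun i => ⟨x.1 i, ((Finset.mem_filter.mp x.2).2.1 i)⟩,
        fun i j h => (Finset.mem_filter.mp x.2).2.2 (congrArg Subtype.val h)⟩
      invFun := fun e => ⟨fun i => ↑(e i), Finset.mem_filter.mpr ⟨mem_univ _,
        fun i => (e i).2, fun i j h => e.injective (Subtype.ext h)⟩⟩
      left_inv := fun x => rfl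
      right_inv := fun e => rfl }
  rw [Fintype.card_congr e, Fintype.card_embedding_eq, Fintype.card_coe, Fintype.card_fin]

lemma sum_injTuples (S : Finset α) (k : ℕ) (f : α → ℂ) :
    ∑ x ∈ univ.filter (fun x : Fin k → α => (∀ i, x i ∈ S) ∧ Function.Injective x),
        ∏ i, f (x i)
      = (k.factorial : ℂ) * ∑ A ∈ S.powersetCard k, ∏ a ∈ A, f a := by
  have hmap : ∀ x ∈ univ.filter (fun x : Fin k → α => (∀ i, x i ∈ S) ∧ Function.Injective x),
      Finset.image x univ ∈ S.powersetCard k := by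
    intro x hx
    obtain ⟨-, hS, hinj⟩ := Finset.mem_filter.mp hx
    refine Finset.mem_powersetCard.mpr ⟨?_, ?_⟩
    · intro a ha
      obtain ⟨i, -, rfl⟩ := Finset.mem_image.mp ha
      exact hS i
    · rw [Finset.card_image_of_injective _ hinj, Finset.card_univ, Fintype.card_fin]
  rw [← Finset.sum_fiberwise_of_maps_to hmap (fun x => ∏ i, f (x i)), mul_sum]
  refine Finset.sum_congr rfl fun A hA => ?_
  obtain ⟨hAS, hAcard⟩ := Finset.mem_powersetCard.mp hA
  have hset : ((univ.filter (fun x : Fin k → α => (∀ i, x i ∈ S) ∧ Function.Injective x)).filter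
        (fun x => Finset.image x univ = A))
      = univ.filter (fun x : Fin k → α => (∀ i, x i ∈ A) ∧ Function.Injective x) := by
    ext x
    simp only [Finset.mem_filter, Finset.mem_univ, true_and]
    constructor
    · rintro ⟨⟨hS, hinj⟩, himg⟩
      exact ⟨fun i => himg ▸ Finset.mem_image_of_mem x (mem_univ i), hinj⟩
    · rintro ⟨hA', hinj⟩
      refine ⟨⟨fun i => hAS (hA' i), hinj⟩, ?_⟩
      have hsub : Finset.image x univ ⊆ A := by
        intro a ha
        obtain ⟨i, -, rfl⟩ := Finset.mem_image.mp ha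
        exact hA' i
      refine Finset.eq_of_subset_of_card_le hsub ?_
      rw [Finset.card_image_of_injective _ hinj, Finset.card_univ, Fintype.card_fin, hAcard]
  have hconst : ∀ x ∈ (univ.filter (fun x : Fin k → α =>
        (∀ i, x i ∈ S) ∧ Function.Injective x)).filter (fun x => Finset.image x univ = A),
      ∏ i, f (x i) = ∏ a ∈ A, f a := by
    intro x hx
    obtain ⟨hx1, himg⟩ := Finset.mem_filter.mp hx
    obtain ⟨-, -, hinj⟩ := Finset.mem_filter.mp hx1
    rw [← himg, Finset.prod_image (fun i _ j _ h => hinj h)]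
  rw [Finset.sum_congr rfl hconst, Finset.sum_const, hset, card_injTuples, hAcard,
    Nat.descFactorial_self, nsmul_eq_mul]

lemma esymm_aeval (S : Finset α) (f : α → ℂ) (j : ℕ) :
    MvPolynomial.aeval (fun a : ↥S => f ↑a) (MvPolynomial.esymm ↥S ℂ j)
      = ∑ A ∈ S.powersetCard j, ∏ a ∈ A, f a := by
  rw [MvPolynomial.aeval_esymm_eq_multiset_esymm]
  have h1 : (univ : Finset ↥S).val.map (fun a : ↥S => f ↑a) = S.val.map f := by
    rw [Finset.univ_eq_attach, Finset.attach_val]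
    exact Multiset.attach_map_val' _ _
  rw [h1, Finset.esymm_map_val]

lemma psum_aeval (S : Finset α) (f : α → ℂ) (m : ℕ) :
    MvPolynomial.aeval (fun a : ↥S => f ↑a) (MvPolynomial.psum ↥S ℂ m)
      = ∑ a ∈ S, f a ^ m := by
  rw [MvPolynomial.psum, map_sum]
  simp only [map_pow, MvPolynomial.aeval_X]
  rw [Finset.univ_eq_attach, Finset.sum_attach S (fun a => f a ^ m)]

lemma newton_complex (S : Finset α) (f : α → ℂ) (k : ℕ) :
    (k : ℂ) * ∑ A ∈ S.powersetCard k, ∏ a ∈ A, f a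
      = (-1) ^ (k + 1) * ∑ i ∈ range k,
          (-1) ^ i * (∑ A ∈ S.powersetCard i, ∏ a ∈ A, f a) * (∑ a ∈ S, f a ^ (k - i)) := by
  have h := congrArg (MvPolynomial.aeval (fun a : ↥S => f ↑a))
    (MvPolynomial.mul_esymm_eq_sum ↥S ℂ k)
  simp only [map_mul, map_natCast, map_sum, map_pow, map_neg, map_one,
    esymm_aeval, psum_aeval] at h
  rw [h]
  congr 1
  refine Finset.sum_bij' (fun a _ => a.1) (fun i _ => (i, k - i)) ?_ ?_ ?_ ?_ ?_
  · intro a ha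
    rw [Finset.mem_filter] at ha
    exact Finset.mem_range.mpr ha.2
  · intro i hi
    rw [Finset.mem_range] at hi
    rw [Finset.mem_filter, Finset.HasAntidiagonal.mem_antidiagonal]
    exact ⟨Nat.add_sub_cancel' hi.le, hi⟩
  · intro a ha
    rw [Finset.mem_filter, Finset.HasAntidiagonal.mem_antidiagonal] at ha
    ext
    · rfl
    · simp only
      omega
  · intro i hi
    rfl
  · intro a ha
    rw [Finset.mem_filter, Finset.HasAntidiagonal.mem_antidiagonal] at ha
    have : a.2 = k - a.1 := by omega
    rw [this]

lemma hockey (Φ : ℝ) (j : ℕ) :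
    Φ * ∑ i ∈ range j, (∏ t ∈ range i, (Φ + t)) / i.factorial
      = j * ((∏ t ∈ range j, (Φ + t)) / j.factorial) := by
  induction j with
  | zero => simp
  | succ j ih =>
    rw [Finset.sum_range_succ, mul_add, ih, Finset.prod_range_succ, Nat.factorial_succ]
    have hj : (j.factorial : ℝ) ≠ 0 := Nat.cast_ne_zero.mpr j.factorial_ne_zero
    have hj1 : (0:ℝ) < j + 1 := by positivity
    push_cast
    field_simp
    ring

lemma esymm_norm_bound (S : Finset α) (f : α → ℂ) (Φ : ℝ) (hΦ : 0 ≤ Φ) (K : ℕ)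
    (hP : ∀ m, 1 ≤ m → m ≤ K → ‖∑ a ∈ S, f a ^ m‖ ≤ Φ) :
    ∀ j, j ≤ K → ‖∑ A ∈ S.powersetCard j, ∏ a ∈ A, f a‖
      ≤ (∏ t ∈ range j, (Φ + t)) / j.factorial := by
  intro j
  induction j using Nat.strong_induction_on with
  | _ j ih =>
    intro hjK
    match j, ih, hjK with
    | 0, _, _ => simp
    | (j+1), ih, hjK =>
      have hprev : ∀ i ∈ range (j+1), ‖∑ A ∈ S.powersetCard i, ∏ a ∈ A, f a‖
          ≤ (∏ t ∈ range i, (Φ + t)) / i.factorial := fun i hi =>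
        ih i (Finset.mem_range.mp hi) (le_trans (Nat.le_of_lt (Finset.mem_range.mp hi)) hjK)
      have hN := newton_complex S f (j+1)
      have hnorm : ((j:ℝ)+1) * ‖∑ A ∈ S.powersetCard (j+1), ∏ a ∈ A, f a‖
          ≤ Φ * ∑ i ∈ range (j+1), (∏ t ∈ range i, (Φ + t)) / i.factorial := by
        have h1 : ((j:ℝ)+1) * ‖∑ A ∈ S.powersetCard (j+1), ∏ a ∈ A, f a‖
            = ‖((j+1 : ℕ) : ℂ) * ∑ A ∈ S.powersetCard (j+1), ∏ a ∈ A, f a‖ := by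
          rw [norm_mul, Complex.norm_natCast]
          push_cast
          ring
        rw [h1, hN, norm_mul, norm_pow, norm_neg, norm_one, one_pow, one_mul]
        calc ‖∑ i ∈ range (j+1), (-1:ℂ) ^ i * (∑ A ∈ S.powersetCard i, ∏ a ∈ A, f a)
              * (∑ a ∈ S, f a ^ (j+1-i))‖
            ≤ ∑ i ∈ range (j+1), ‖(-1:ℂ) ^ i * (∑ A ∈ S.powersetCard i, ∏ a ∈ A, f a)
              * (∑ a ∈ S, f a ^ (j+1-i))‖ := norm_sum_le _ _
          _ ≤ ∑ i ∈ range (j+1), ((∏ t ∈ range i, (Φ + t)) / i.factorial) * Φ := by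
              refine Finset.sum_le_sum fun i hi => ?_
              rw [norm_mul, norm_mul, norm_pow, norm_neg, norm_one, one_pow, one_mul]
              have hm : ‖∑ a ∈ S, f a ^ (j+1-i)‖ ≤ Φ := by
                refine hP _ ?_ (le_trans (Nat.sub_le _ _) hjK)
                have := Finset.mem_range.mp hi
                omega
              exact mul_le_mul (hprev i hi) hm (norm_nonneg _)
                (div_nonneg (Finset.prod_nonneg fun t _ => by positivity)
                  (by positivity))
          _ = Φ * ∑ i ∈ range (j+1), (∏ t ∈ range i, (Φ + t)) / i.factorial := by
              rw [Finset.mul_sum]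
              exact Finset.sum_congr rfl fun i _ => mul_comm _ _
      have hc : ((j+1:ℕ):ℝ) = (j:ℝ)+1 := by push_cast; ring
      rw [hockey, hc] at hnorm
      have hj1 : (0:ℝ) < (j:ℝ) + 1 := by positivity
      exact le_of_mul_le_mul_left hnorm hj1

end Helpers


section Bias
variable {p : ℕ} [hp : Fact p.Prime]

lemma addChar_map_sum {M : Type*} [CommMonoid M] {ι : Type*} (χ : AddChar (ZMod p) M)
    (s : Finset ι) (f : ι → ZMod p) : χ (∑ i ∈ s, f i) = ∏ i ∈ s, χ (f i) := by
  induction s using Finset.cons_induction with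
  | empty => simp
  | cons a s ha ih => rw [Finset.sum_cons, Finset.prod_cons, AddChar.map_add_eq_mul, ih]

lemma bias_bddAbove (D : Finset (ZMod p)) :
    BddAbove {r : ℝ | ∃ χ : AddChar (ZMod p) ℂ, χ ≠ 1 ∧ r = ‖∑ a ∈ D, χ a‖} := by
  haveI : NeZero p := ⟨hp.out.ne_zero⟩
  refine ⟨D.card, ?_⟩
  rintro r ⟨χ, -, rfl⟩
  calc ‖∑ a ∈ D, χ a‖ ≤ ∑ a ∈ D, ‖χ a‖ := norm_sum_le _ _
    _ = D.card := by simp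

lemma bias_mem_le (D : Finset (ZMod p)) {χ : AddChar (ZMod p) ℂ} (hχ : χ ≠ 1) :
    ‖∑ a ∈ D, χ a‖ ≤ fourierBias D :=
  le_csSup (bias_bddAbove D) ⟨χ, hχ, rfl⟩

lemma bias_nonneg (D : Finset (ZMod p)) : 0 ≤ fourierBias D := by
  haveI : NeZero p := ⟨hp.out.ne_zero⟩
  have hcard : 1 < Fintype.card (AddChar (ZMod p) ℂ) := by
    rw [AddChar.card_eq, ZMod.card]
    exact hp.out.one_lt
  obtain ⟨χ0, hχ0⟩ := Fintype.exists_ne_of_one_lt_card hcard 1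
  exact le_trans (norm_nonneg _) (bias_mem_le D hχ0)

lemma bias_pow_le (D : Finset (ZMod p)) {χ : AddChar (ZMod p) ℂ} (hχ : χ ≠ 1)
    {m : ℕ} (h1 : 1 ≤ m) (h2 : m ≤ p - 1) :
    ‖∑ a ∈ D, χ a ^ m‖ ≤ fourierBias D := by
  have hm0 : ((m : ℕ) : ZMod p) ≠ 0 := by
    rw [Ne, ZMod.natCast_eq_zero_iff]
    exact Nat.not_dvd_of_pos_of_lt h1 (by have := hp.out.two_le; omega)
  have hne : AddChar.mulShift χ (m : ZMod p) ≠ 1 := AddChar.IsPrimitive.of_ne_one hχ hm0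
  have heq : ∀ a : ZMod p, χ a ^ m = (AddChar.mulShift χ (m : ZMod p)) a := by
    intro a
    rw [AddChar.mulShift_apply, ← nsmul_eq_mul, AddChar.map_nsmul_eq_pow]
  calc ‖∑ a ∈ D, χ a ^ m‖ = ‖∑ a ∈ D, (AddChar.mulShift χ (m : ZMod p)) a‖ := by simp_rw [heq]
    _ ≤ fourierBias D := bias_mem_le D hne

end Bias


/-- Let `N` be the number of `k`-tuples of pairwise distinct elements of `D`
summing to `b`.  Then `N ≥ n(n-1)⋯(n-k+1)/p - ∏_{j=0}^{k-1} (Φ(D)+j)`, where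
`n = |D|`; equivalently `N/k! ≥ (1/p)·C(n,k) - C(Φ(D)+k-1, k)`. -/
theorem card_distinct_tuples_sum_eq_ge {p : ℕ} [hp : Fact p.Prime]
    (D : Finset (ZMod p)) (hD : D.Nonempty) (b : ZMod p)
    {k : ℕ} (hk : 0 < k) (hkp : k ≤ p - 1) :
    ((Finset.univ.filter (fun x : Fin k → ZMod p =>
        (∀ i, x i ∈ D) ∧ Function.Injective x ∧ ∑ i, x i = b)).card : ℝ) ≥
      (Nat.descFactorial D.card k : ℝ) / p -
        ∏ j ∈ Finset.range k, (fourierBias D + (j : ℝ)) := by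
  haveI : NeZero p := ⟨hp.out.ne_zero⟩
  classical
  set Φ := fourierBias D with hΦdef
  have hΦ0 : 0 ≤ Φ := bias_nonneg D
  set B := ∏ j ∈ Finset.range k, (Φ + (j : ℝ)) with hBdef
  have hB0 : 0 ≤ B := Finset.prod_nonneg fun t _ => by positivity
  set T := univ.filter (fun x : Fin k → ZMod p =>
    (∀ i, x i ∈ D) ∧ Function.Injective x) with hT
  set Nb := univ.filter (fun x : Fin k → ZMod p =>
    (∀ i, x i ∈ D) ∧ Function.Injective x ∧ ∑ i, x i = b) with hNb
  have hNbT : Nb = T.filter (fun x => ∑ i, x i = b) := by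
    rw [hNb, hT, Finset.filter_filter]
    apply Finset.filter_congr
    intro x _
    tauto
  have key : ∑ χ : AddChar (ZMod p) ℂ, (χ (-b) * ∑ x ∈ T, ∏ i, χ (x i))
      = (p : ℂ) * Nb.card := by
    calc ∑ χ : AddChar (ZMod p) ℂ, (χ (-b) * ∑ x ∈ T, ∏ i, χ (x i))
        = ∑ χ : AddChar (ZMod p) ℂ, ∑ x ∈ T, χ (-b) * ∏ i, χ (x i) := by
          simp_rw [Finset.mul_sum]
      _ = ∑ x ∈ T, ∑ χ : AddChar (ZMod p) ℂ, χ (-b) * ∏ i, χ (x i) := Finset.sum_comm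
      _ = ∑ x ∈ T, ∑ χ : AddChar (ZMod p) ℂ, χ (∑ i, x i - b) := by
          refine Finset.sum_congr rfl fun x _ => Finset.sum_congr rfl fun χ _ => ?_
          rw [sub_eq_add_neg, add_comm, AddChar.map_add_eq_mul, addChar_map_sum]
      _ = ∑ x ∈ T, if (∑ i, x i - b = 0) then (p : ℂ) else 0 := by
          refine Finset.sum_congr rfl fun x _ => ?_
          rw [AddChar.sum_apply_eq_ite, ZMod.card]
      _ = ∑ x ∈ T, if (∑ i, x i = b) then (p : ℂ) else 0 := by
          simp_rw [sub_eq_zero]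
      _ = (p : ℂ) * Nb.card := by
          rw [← Finset.sum_filter, ← hNbT, Finset.sum_const, nsmul_eq_mul, mul_comm]
  have split : (p : ℂ) * Nb.card = (D.card.descFactorial k : ℂ)
      + ∑ χ ∈ univ.erase (1 : AddChar (ZMod p) ℂ), (χ (-b) * ∑ x ∈ T, ∏ i, χ (x i)) := by
    rw [← key, ← Finset.add_sum_erase univ _ (Finset.mem_univ (1 : AddChar (ZMod p) ℂ))]
    congr 1
    simp only [AddChar.one_apply, one_mul, Finset.prod_const_one, Finset.sum_const,
      nsmul_eq_mul, mul_one]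
    rw [hT, card_injTuples]
  have hbound : ∀ χ : AddChar (ZMod p) ℂ, χ ≠ 1 →
      ‖χ (-b) * ∑ x ∈ T, ∏ i, χ (x i)‖ ≤ B := by
    intro χ hχ
    rw [norm_mul, AddChar.norm_apply, one_mul, hT, sum_injTuples, norm_mul,
      Complex.norm_natCast]
    have hE := esymm_norm_bound D (fun a => χ a) Φ hΦ0 (p - 1)
      (fun m h1 h2 => bias_pow_le D hχ h1 h2) k hkp
    have hf0 : (0:ℝ) < k.factorial := by positivity
    calc (k.factorial : ℝ) * ‖∑ A ∈ D.powersetCard k, ∏ a ∈ A, χ a‖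
        ≤ (k.factorial : ℝ) * ((∏ t ∈ Finset.range k, (Φ + t)) / k.factorial) :=
          mul_le_mul_of_nonneg_left hE (le_of_lt hf0)
      _ = B := by rw [hBdef]; field_simp
  set R := ∑ χ ∈ univ.erase (1 : AddChar (ZMod p) ℂ), (χ (-b) * ∑ x ∈ T, ∏ i, χ (x i))
    with hR
  have hRnorm : ‖R‖ ≤ ((p : ℝ) - 1) * B := by
    calc ‖R‖ ≤ ∑ χ ∈ univ.erase (1 : AddChar (ZMod p) ℂ),
          ‖χ (-b) * ∑ x ∈ T, ∏ i, χ (x i)‖ := norm_sum_le _ _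
      _ ≤ ∑ χ ∈ univ.erase (1 : AddChar (ZMod p) ℂ), B := by
          refine Finset.sum_le_sum fun χ hχ => ?_
          exact hbound χ (Finset.mem_erase.mp hχ).1
      _ = ((p : ℝ) - 1) * B := by
          rw [Finset.sum_const, nsmul_eq_mul, Finset.card_erase_of_mem (Finset.mem_univ _),
            Finset.card_univ, AddChar.card_eq, ZMod.card]
          have : (1:ℕ) ≤ p := hp.out.one_lt.le
          push_cast [Nat.cast_sub this]
          ring
  have hre : (p : ℝ) * Nb.card = (D.card.descFactorial k : ℝ) + R.re := by
    have h := congrArg Complex.re split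
    simpa using h
  have hRre : -(((p : ℝ) - 1) * B) ≤ R.re := by
    have h2 : |R.re| ≤ ‖R‖ := by
      exact Complex.abs_re_le_norm R
    have h1 : -‖R‖ ≤ R.re := (abs_le.mp h2).1
    linarith
  have hp0 : (0:ℝ) < p := by exact_mod_cast hp.out.pos
  have hmain : (Nat.descFactorial D.card k : ℝ) - ((p:ℝ) - 1) * B ≤ (p:ℝ) * Nb.card := by
    rw [hre]
    linarith
  rw [ge_iff_le, sub_le_iff_le_add, div_le_iff₀ hp0]
  nlinarith [hB0, hp0, hmain]
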